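/- For all nonnegative integers m and n and any x, the degenerate Fubini polynomials satisfy the Spivey-type recurrence F_{n+m,λ}(x) = Σ_{k=0}^m Σ_{l=0}^n k! {m brace k}_λ C(n,l) x^k F_{n−l,λ}^{(k)}(x, k−mλ) F_{l,λ}(x). -/

import Mathlib

open PowerSeries

/-- The degenerate falling factorial `(x)_{n,λ}`. -/
def degFall (lam x : ℝ) (n : ℕ) : ℝ := ∏ i ∈ Finset.range n, (x - i * lam)

/-- The ordinary falling factorial `(x)_k`. -/
def fallF (x : ℝ) (k : ℕ) : ℝ := ∏ i ∈ Finset.range k, (x - i)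

/-- The degenerate exponential `e_λ^y(t) = Σ_{m≥0} (y)_{m,λ} t^m/m!`. -/
noncomputable def degExpP (lam y : ℝ) : PowerSeries ℝ :=
  PowerSeries.mk fun m => degFall lam y m / (Nat.factorial m)

/-- The two-variable degenerate Fubini polynomials of order `k ∈ ℕ`, defined by
`(1/(1 − x(e_λ(t) − 1)))^k e_λ^y(t) = Σ_j F_{j,λ}^{(k)}(x,y) t^j/j!`. -/
noncomputable def degFubiniOrd (lam : ℝ) (k : ℕ) (x y : ℝ) (j : ℕ) : ℝ :=
  (Nat.factorial j : ℝ) * PowerSeries.coeff (R := ℝ) j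
    (((1 - PowerSeries.C (R := ℝ) x * (degExpP lam 1 - 1))⁻¹) ^ k * degExpP lam y)

noncomputable def Gser (lam x : ℝ) : PowerSeries ℝ :=
  (1 - PowerSeries.C (R := ℝ) x * (degExpP lam 1 - 1))⁻¹

noncomputable def Sf (lam : ℝ) (m k : ℕ) : ℝ :=
  (∑ j ∈ Finset.range (k+1), (-1:ℝ)^(k+j) * (k.choose j) * degFall lam j m) / (Nat.factorial k)

theorem degFall_zero (lam z : ℝ) : degFall lam z 0 = 1 := rfl

theorem degFall_succ (lam z : ℝ) (n : ℕ) :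
    degFall lam z (n+1) = degFall lam z n * (z - n*lam) := Finset.prod_range_succ _ _

theorem degFall_succ' (lam z : ℝ) (n : ℕ) :
    degFall lam z (n+1) = z * degFall lam (z - lam) n := by
  have h : degFall lam z (n+1) = (∏ i ∈ Finset.range n, ((z - lam) - i*lam)) * (z - (0:ℕ)*lam) := by
    unfold degFall
    rw [Finset.prod_range_succ']
    congr 1
    apply Finset.prod_congr rfl
    intro i _
    push_cast
    ring
  rw [h, show (∏ i ∈ Finset.range n, ((z - lam) - i*lam)) = degFall lam (z-lam) n from rfl]
  push_cast
  ring

theorem degFall_add (lam a b : ℝ) : ∀ N, degFall lam (a+b) N =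
    ∑ j ∈ Finset.range (N+1), (N.choose j : ℝ) * degFall lam a j * degFall lam b (N-j)
  | 0 => by simp [degFall]
  | (N+1) => by
    have IH := degFall_add lam a b N
    rw [degFall_succ, IH, Finset.sum_mul]
    have split : ∀ j ∈ Finset.range (N+1),
        (N.choose j : ℝ) * degFall lam a j * degFall lam b (N-j) * (a + b - N*lam)
        = (N.choose j : ℝ) * degFall lam a (j+1) * degFall lam b (N-j)
          + (N.choose j : ℝ) * degFall lam a j * degFall lam b (N-j+1) := by
      intro j hj
      rw [Finset.mem_range] at hj
      rw [degFall_succ, degFall_succ]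
      have hc : ((N - j : ℕ) : ℝ) = (N : ℝ) - j := by
        rw [Nat.cast_sub (by omega)]
      rw [hc]
      ring
    rw [Finset.sum_congr rfl split, Finset.sum_add_distrib]
    rw [Finset.sum_range_succ' (fun j => ((N+1).choose j : ℝ) * degFall lam a j * degFall lam b (N+1-j))]
    have h1 : ∀ j ∈ Finset.range (N+1),
        (((N+1).choose (j+1) : ℕ) : ℝ) * degFall lam a (j+1) * degFall lam b (N+1-(j+1))
        = (N.choose j : ℝ) * degFall lam a (j+1) * degFall lam b (N-j)
          + (N.choose (j+1) : ℝ) * degFall lam a (j+1) * degFall lam b (N-j) := by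
      intro j hj
      rw [Nat.choose_succ_succ N j, show N + 1 - (j+1) = N - j by omega]
      push_cast
      ring
    rw [Finset.sum_congr rfl h1, Finset.sum_add_distrib]
    have h2 : ∑ j ∈ Finset.range (N+1), (N.choose (j+1) : ℝ) * degFall lam a (j+1) * degFall lam b (N-j)
        = (∑ j ∈ Finset.range (N+1), (N.choose j : ℝ) * degFall lam a j * degFall lam b (N-j+1))
          - degFall lam b (N+1) := by
      rw [Finset.sum_range_succ (fun j => (N.choose (j+1) : ℝ) * degFall lam a (j+1) * degFall lam b (N-j)),
          Nat.choose_succ_self]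
      rw [Finset.sum_range_succ' (fun j => (N.choose j : ℝ) * degFall lam a j * degFall lam b (N-j+1))]
      have h3 : ∀ j ∈ Finset.range N,
          (N.choose (j+1) : ℝ) * degFall lam a (j+1) * degFall lam b (N-(j+1)+1)
          = (N.choose (j+1) : ℝ) * degFall lam a (j+1) * degFall lam b (N-j) := by
        intro j hj
        rw [Finset.mem_range] at hj
        rw [show N - (j+1) + 1 = N - j by omega]
      rw [Finset.sum_congr rfl h3]
      simp [degFall_zero]
    rw [h2]
    simp only [degFall_zero, Nat.choose_zero_right, Nat.cast_one, Nat.cast_zero, one_mul, mul_one,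
      Nat.sub_zero]
    ring

theorem coeff_degExpP (lam y : ℝ) (N : ℕ) :
    PowerSeries.coeff (R := ℝ) N (degExpP lam y) = degFall lam y N / (Nat.factorial N) :=
  PowerSeries.coeff_mk _ _

theorem degExpP_zero (lam : ℝ) : degExpP lam 0 = 1 := by
  ext N
  rw [coeff_degExpP, PowerSeries.coeff_one]
  cases N with
  | zero => simp [degFall]
  | succ n =>
    rw [degFall_succ']
    simp

theorem constantCoeff_degExpP (lam y : ℝ) :
    PowerSeries.constantCoeff (R := ℝ) (degExpP lam y) = 1 := by
  have := coeff_degExpP lam y 0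
  rw [PowerSeries.coeff_zero_eq_constantCoeff] at this
  simp [degFall] at this ⊢
  exact this

theorem degExpP_mul (lam a b : ℝ) :
    degExpP lam a * degExpP lam b = degExpP lam (a+b) := by
  ext N
  rw [PowerSeries.coeff_mul, Finset.Nat.sum_antidiagonal_eq_sum_range_succ_mk]
  simp only [coeff_degExpP]
  rw [degFall_add, Finset.sum_div]
  apply Finset.sum_congr rfl
  intro j hj
  rw [Finset.mem_range] at hj
  rw [Nat.cast_choose ℝ (by omega : j ≤ N)]
  have h1 : (Nat.factorial j : ℝ) ≠ 0 := Nat.cast_ne_zero.2 (Nat.factorial_ne_zero j)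
  have h2 : (Nat.factorial (N-j) : ℝ) ≠ 0 := Nat.cast_ne_zero.2 (Nat.factorial_ne_zero _)
  have h3 : (Nat.factorial N : ℝ) ≠ 0 := Nat.cast_ne_zero.2 (Nat.factorial_ne_zero N)
  field_simp

theorem derivative_degExpP (lam y : ℝ) :
    d⁄dX ℝ (degExpP lam y) = PowerSeries.C (R := ℝ) y * degExpP lam (y - lam) := by
  ext N
  rw [PowerSeries.coeff_derivative, coeff_degExpP]
  rw [PowerSeries.coeff_C_mul, coeff_degExpP]
  rw [degFall_succ']
  rw [Nat.factorial_succ]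
  have h1 : (Nat.factorial N : ℝ) ≠ 0 := Nat.cast_ne_zero.2 (Nat.factorial_ne_zero N)
  field_simp
  push_cast
  ring

theorem constantCoeff_base (lam x : ℝ) :
    PowerSeries.constantCoeff (R := ℝ) (1 - PowerSeries.C (R := ℝ) x * (degExpP lam 1 - 1)) = 1 := by
  simp [constantCoeff_degExpP]

theorem base_mul_Gser (lam x : ℝ) :
    (1 - PowerSeries.C (R := ℝ) x * (degExpP lam 1 - 1)) * Gser lam x = 1 :=
  PowerSeries.mul_inv_cancel _ (by rw [constantCoeff_base]; norm_num)

theorem derivative_Gser (lam x : ℝ) :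
    d⁄dX ℝ (Gser lam x) = PowerSeries.C (R := ℝ) x * degExpP lam (1-lam) * (Gser lam x)^2 := by
  unfold Gser
  rw [PowerSeries.derivative_inv']
  have h : d⁄dX ℝ (1 - PowerSeries.C (R := ℝ) x * (degExpP lam 1 - 1))
      = -(PowerSeries.C (R := ℝ) x * degExpP lam (1-lam)) := by
    rw [map_sub]
    have : d⁄dX ℝ (PowerSeries.C (R := ℝ) x * (degExpP lam 1 - 1))
        = PowerSeries.C (R := ℝ) x * degExpP lam (1-lam) := by
      rw [Derivation.leibniz]
      simp only [PowerSeries.derivative_C, smul_zero, add_zero, map_sub,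
        Derivation.map_one_eq_zero, sub_zero, derivative_degExpP, map_one, one_mul, smul_eq_mul]
      ring
    rw [this]
    simp
  rw [h]
  ring

theorem degExpP_pow (lam : ℝ) (j : ℕ) : (degExpP lam 1)^j = degExpP lam j := by
  induction j with
  | zero => simp [degExpP_zero]
  | succ n ih =>
    rw [pow_succ, ih, degExpP_mul]
    push_cast
    ring_nf

theorem coeff_sub_one_pow (lam : ℝ) (k N : ℕ) :
    PowerSeries.coeff (R := ℝ) N ((degExpP lam 1 - 1)^k)
      = (Nat.factorial k : ℝ) * Sf lam N k / (Nat.factorial N) := by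
  rw [sub_pow, map_sum]
  unfold Sf
  have hk : (Nat.factorial k : ℝ) ≠ 0 := Nat.cast_ne_zero.2 (Nat.factorial_ne_zero k)
  rw [show (Nat.factorial k : ℝ) * ((∑ j ∈ Finset.range (k+1),
        (-1:ℝ)^(k+j) * (k.choose j) * degFall lam j N) / (Nat.factorial k))
      = ∑ j ∈ Finset.range (k+1), (-1:ℝ)^(k+j) * (k.choose j) * degFall lam j N from by
    field_simp]
  rw [Finset.sum_div]
  apply Finset.sum_congr rfl
  intro j hj
  have hterm : ((-1:PowerSeries ℝ))^(j+k) * (degExpP lam 1)^j * (1:PowerSeries ℝ)^(k-j) * ((k.choose j : ℕ) : PowerSeries ℝ)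
      = PowerSeries.C (R := ℝ) ((-1:ℝ)^(j+k) * (k.choose j)) * degExpP lam j := by
    rw [one_pow, mul_one, degExpP_pow, map_mul, map_pow, map_neg, map_one, map_natCast]
    ring
  rw [hterm, PowerSeries.coeff_C_mul, coeff_degExpP]
  rw [show j + k = k + j from by omega]
  ring

theorem coeff_Gser (lam x : ℝ) (N : ℕ) :
    PowerSeries.coeff (R := ℝ) N (Gser lam x)
      = ∑ k ∈ Finset.range (N+1), x^k * PowerSeries.coeff (R := ℝ) N ((degExpP lam 1 - 1)^k) := by
  set u : PowerSeries ℝ := PowerSeries.C (R := ℝ) x * (degExpP lam 1 - 1) with hu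
  have key : Gser lam x - ∑ k ∈ Finset.range (N+1), u^k = u^(N+1) * Gser lam x := by
    have h1 : (1 - u) * Gser lam x = 1 := base_mul_Gser lam x
    have h2 : (∑ k ∈ Finset.range (N+1), u^k) * (u - 1) = u^(N+1) - 1 := geom_sum_mul u (N+1)
    calc Gser lam x - ∑ k ∈ Finset.range (N+1), u^k
        = Gser lam x - (∑ k ∈ Finset.range (N+1), u^k) * ((1-u) * Gser lam x) := by rw [h1, mul_one]
      _ = (1 - (∑ k ∈ Finset.range (N+1), u^k) * (1-u)) * Gser lam x := by ring
      _ = u^(N+1) * Gser lam x := by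
          have : (∑ k ∈ Finset.range (N+1), u^k) * (1-u) = 1 - u^(N+1) := by
            have := h2; linear_combination -this
          rw [this]; ring
  have hvanish : PowerSeries.coeff (R := ℝ) N (u^(N+1) * Gser lam x) = 0 := by
    have hX : (PowerSeries.X : PowerSeries ℝ) ∣ u := by
      apply PowerSeries.X_dvd_iff.2
      simp [hu, constantCoeff_degExpP]
    have hXp : (PowerSeries.X : PowerSeries ℝ)^(N+1) ∣ u^(N+1) * Gser lam x :=
      Dvd.dvd.mul_right (pow_dvd_pow_of_dvd hX (N+1)) _
    exact (PowerSeries.X_pow_dvd_iff.1 hXp) N (by omega)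
  have : PowerSeries.coeff (R := ℝ) N (Gser lam x)
      = PowerSeries.coeff (R := ℝ) N (∑ k ∈ Finset.range (N+1), u^k) := by
    have := congrArg (PowerSeries.coeff (R := ℝ) N) key
    rw [map_sub, hvanish] at this
    linarith
  rw [this, map_sum]
  apply Finset.sum_congr rfl
  intro k _
  rw [hu, mul_pow, ← map_pow, PowerSeries.coeff_C_mul]

theorem alt_sum_choose_real (n : ℕ) :
    ∑ r ∈ Finset.range (n+1), (-1:ℝ)^r * (n.choose r) = if n = 0 then 1 else 0 := by
  have h := Int.alternating_sum_range_choose (n := n)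
  have := congrArg (Int.cast : ℤ → ℝ) h
  push_cast at this
  rw [this]

theorem fallF_nat (j i : ℕ) : fallF (j:ℝ) i = (Nat.factorial i : ℝ) * (j.choose i) := by
  rcases le_or_gt i j with h | h
  · have : fallF (j:ℝ) i = ((j.descFactorial i : ℕ) : ℝ) := by
      rw [Nat.descFactorial_eq_prod_range]
      push_cast [Nat.cast_prod]
      unfold fallF
      apply Finset.prod_congr rfl
      intro t ht
      rw [Finset.mem_range] at ht
      rw [Nat.cast_sub (by omega)]
    rw [this, Nat.descFactorial_eq_factorial_mul_choose]
    push_cast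
    ring
  · have h1 : fallF (j:ℝ) i = 0 := by
      unfold fallF
      apply Finset.prod_eq_zero (Finset.mem_range.2 h)
      simp
    rw [h1, Nat.choose_eq_zero_of_lt h]
    simp

theorem orth (k i : ℕ) :
    ∑ j ∈ Finset.range (k+1), (-1:ℝ)^(k+j) * (k.choose j) * (j.choose i)
      = if i = k then 1 else 0 := by
  rcases le_or_gt i k with h | h
  · have h1 : ∑ j ∈ Finset.range (k+1), (-1:ℝ)^(k+j) * (k.choose j) * (j.choose i)
        = ∑ j ∈ Finset.Ico i (k+1), (-1:ℝ)^(k+j) * (k.choose j) * (j.choose i) := by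
      symm
      apply Finset.sum_subset
      · intro j hj
        rw [Finset.mem_Ico] at hj
        exact Finset.mem_range.2 hj.2
      · intro j hj hnj
        rw [Finset.mem_range] at hj
        rw [Finset.mem_Ico, not_and_or, not_le] at hnj
        have : j < i := by omega
        rw [Nat.choose_eq_zero_of_lt this]
        simp
    rw [h1, Finset.sum_Ico_eq_sum_range]
    have h2 : k + 1 - i = (k - i) + 1 := by omega
    rw [h2]
    have h3 : ∀ r ∈ Finset.range ((k-i)+1),
        (-1:ℝ)^(k+(i+r)) * (k.choose (i+r)) * ((i+r).choose i)
        = ((-1:ℝ)^(k+i) * (k.choose i)) * ((-1:ℝ)^r * ((k-i).choose r)) := by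
      intro r hr
      rw [Finset.mem_range] at hr
      have hc : k.choose (i+r) * (i+r).choose i = k.choose i * (k-i).choose r := by
        have := Nat.choose_mul (n := k) (show i ≤ i + r by omega)
        rw [this, show i + r - i = r by omega]
      have : ((k.choose (i+r)) : ℝ) * ((i+r).choose i) = (k.choose i : ℝ) * ((k-i).choose r) := by
        exact_mod_cast congrArg (Nat.cast : ℕ → ℝ) hc
      calc (-1:ℝ)^(k+(i+r)) * (k.choose (i+r)) * ((i+r).choose i)
          = (-1:ℝ)^(k+i) * (-1:ℝ)^r * ((k.choose (i+r) : ℝ) * ((i+r).choose i)) := by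
            rw [← pow_add]; ring_nf
        _ = ((-1:ℝ)^(k+i) * (k.choose i)) * ((-1:ℝ)^r * ((k-i).choose r)) := by rw [this]; ring
    rw [Finset.sum_congr rfl h3, ← Finset.mul_sum, alt_sum_choose_real]
    rcases eq_or_lt_of_le h with rfl | hlt
    · simp
    · rw [if_neg (by omega), if_neg (by omega)]
      simp
  · have h1 : ∀ j ∈ Finset.range (k+1), (-1:ℝ)^(k+j) * (k.choose j) * (j.choose i) = 0 := by
      intro j hj
      rw [Finset.mem_range] at hj
      rw [Nat.choose_eq_zero_of_lt (by omega : j < i)]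
      simp
    rw [Finset.sum_eq_zero h1, if_neg (by omega)]

theorem Sf_eq_S (lam : ℝ) (S : ℕ → ℕ → ℝ)
    (hS : ∀ (n : ℕ) (z : ℝ),
      degFall lam z n = ∑ k ∈ Finset.range (n + 1), S n k * fallF z k)
    (m k : ℕ) : Sf lam m k = if k ≤ m then S m k else 0 := by
  have key : ∑ j ∈ Finset.range (k+1), (-1:ℝ)^(k+j) * (k.choose j) * degFall lam j m
      = ∑ i ∈ Finset.range (m+1), S m i * (Nat.factorial i) * (if i = k then 1 else 0) := by
    have h1 : ∀ j ∈ Finset.range (k+1),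
        (-1:ℝ)^(k+j) * (k.choose j) * degFall lam j m
        = ∑ i ∈ Finset.range (m+1), S m i * (Nat.factorial i) *
            ((-1:ℝ)^(k+j) * (k.choose j) * (j.choose i)) := by
      intro j _
      rw [hS m (j:ℝ), Finset.mul_sum]
      apply Finset.sum_congr rfl
      intro i _
      rw [fallF_nat]
      ring
    rw [Finset.sum_congr rfl h1, Finset.sum_comm]
    apply Finset.sum_congr rfl
    intro i _
    rw [← Finset.mul_sum, orth]
  unfold Sf
  rw [key]
  have hk : (Nat.factorial k : ℝ) ≠ 0 := Nat.cast_ne_zero.2 (Nat.factorial_ne_zero k)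
  rcases le_or_gt k m with h | h
  · rw [Finset.sum_eq_single k]
    · rw [if_pos h, if_pos rfl]
      field_simp
    · intro i _ hik
      rw [if_neg hik, mul_zero]
    · intro hk2
      exfalso
      exact hk2 (Finset.mem_range.2 (by omega))
  · rw [if_neg (by omega)]
    rw [Finset.sum_eq_zero, zero_div]
    intro i hi
    rw [Finset.mem_range] at hi
    rw [if_neg (by omega), mul_zero]

theorem Sf_zero_succ (lam : ℝ) (m : ℕ) :
    Sf lam (m+1) 0 = ((0:ℝ) - m*lam) * Sf lam m 0 := by
  unfold Sf
  simp only [zero_add, Finset.range_one, Finset.sum_singleton, Nat.choose_self, pow_zero,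
    Nat.cast_one, Nat.factorial_zero, div_one, Nat.cast_zero, one_mul]
  rw [degFall_succ]
  ring

theorem choose_succ_real (j k : ℕ) (h : j ≤ k) :
    ((k:ℝ) + 1 - j) * ((k+1).choose j) = ((k:ℝ)+1) * (k.choose j) := by
  have hn := Nat.choose_mul_succ_eq k j
  have : ((k.choose j * (k+1) : ℕ) : ℝ) = (((k+1).choose j * (k+1-j) : ℕ) : ℝ) := by
    rw [hn]
  push_cast [Nat.cast_sub (by omega : j ≤ k+1)] at this
  linarith [this]

theorem Sf_succ_succ (lam : ℝ) (m k : ℕ) :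
    Sf lam (m+1) (k+1) = Sf lam m k + (((k:ℝ)+1) - m*lam) * Sf lam m (k+1) := by
  have key : ∑ j ∈ Finset.range (k+2), (-1:ℝ)^(k+1+j) * ((k+1).choose j) * degFall lam j (m+1)
      = ((k:ℝ)+1) * (∑ j ∈ Finset.range (k+1), (-1:ℝ)^(k+j) * (k.choose j) * degFall lam j m)
        + (((k:ℝ)+1) - m*lam) *
          (∑ j ∈ Finset.range (k+2), (-1:ℝ)^(k+1+j) * ((k+1).choose j) * degFall lam j m) := by
    have h1 : ∀ j ∈ Finset.range (k+2),
        (-1:ℝ)^(k+1+j) * ((k+1).choose j) * degFall lam j (m+1)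
        = (-1:ℝ)^(k+1+j) * ((k+1).choose j) * degFall lam j m * ((j:ℝ) - ((k:ℝ)+1))
          + (((k:ℝ)+1) - m*lam) * ((-1:ℝ)^(k+1+j) * ((k+1).choose j) * degFall lam j m) := by
      intro j _
      rw [degFall_succ]
      ring
    rw [Finset.sum_congr rfl h1, Finset.sum_add_distrib, ← Finset.mul_sum]
    congr 1
    rw [Finset.sum_range_succ]
    simp only [Nat.cast_add, Nat.cast_one, sub_self, mul_zero, add_zero]
    rw [Finset.mul_sum]
    apply Finset.sum_congr rfl
    intro j hj
    rw [Finset.mem_range] at hj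
    have hh := choose_succ_real j k (by omega)
    have hsign : (-1:ℝ)^(k+1+j) = -(-1:ℝ)^(k+j) := by
      rw [show k+1+j = (k+j)+1 by omega, pow_succ]
      ring
    rw [hsign]
    linear_combination ((-1:ℝ)^(k+j) * degFall lam j m) * hh
  unfold Sf
  rw [show k+1+1 = k+2 from rfl, key, Nat.factorial_succ]
  have hk : (Nat.factorial k : ℝ) ≠ 0 := Nat.cast_ne_zero.2 (Nat.factorial_ne_zero k)
  have hk1 : ((k:ℝ)+1) ≠ 0 := by positivity
  push_cast
  field_simp

theorem Sf_zero_zero (lam : ℝ) : Sf lam 0 0 = 1 := by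
  unfold Sf
  simp [degFall]

theorem regroup {R : Type*} [CommRing R] (A B Cc F : ℕ → R) (m : ℕ)
    (h0 : Cc 0 = B 0) (hsucc : ∀ k, Cc (k+1) = A k + B (k+1)) (htop : B (m+1) = 0) :
    ∑ k ∈ Finset.range (m+1), (A k * F (k+1) + B k * F k)
      = ∑ k ∈ Finset.range (m+2), Cc k * F k := by
  rw [Finset.sum_range_succ' (fun k => Cc k * F k) (m+1)]
  simp only [hsucc, h0, add_mul]
  rw [Finset.sum_add_distrib, Finset.sum_add_distrib]
  have hB : ∑ k ∈ Finset.range (m+1), B k * F k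
      = ∑ k ∈ Finset.range (m+1), B (k+1) * F (k+1) + B 0 * F 0 := by
    have e2 := Finset.sum_range_succ (fun k => B k * F k) (m+1)
    rw [htop, zero_mul, add_zero] at e2
    rw [← e2]
    exact Finset.sum_range_succ' (fun k => B k * F k) (m+1)
  rw [hB]
  ring

theorem main_ind (lam x : ℝ) (hvan : ∀ m' : ℕ, Sf lam m' (m'+1) = 0) (m : ℕ) :
    (d⁄dX ℝ)^[m] (Gser lam x) = ∑ k ∈ Finset.range (m+1),
      PowerSeries.C (R := ℝ) ((Nat.factorial k : ℝ) * Sf lam m k * x^k) *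
        ((Gser lam x)^(k+1) * degExpP lam ((k:ℝ) - m*lam)) := by
  induction m with
  | zero =>
    simp only [Function.iterate_zero, id_eq, zero_add, Finset.range_one, Finset.sum_singleton,
      Nat.factorial_zero, Nat.cast_one, Sf_zero_zero, pow_zero, mul_one, one_mul, Nat.cast_zero,
      pow_one, zero_mul, zero_sub, neg_zero, degExpP_zero, map_one]
  | succ m IH =>
    rw [Function.iterate_succ_apply', IH, map_sum]
    have step : ∀ k ∈ Finset.range (m+1),
        d⁄dX ℝ (PowerSeries.C (R := ℝ) ((Nat.factorial k : ℝ) * Sf lam m k * x^k) *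
          ((Gser lam x)^(k+1) * degExpP lam ((k:ℝ) - m*lam)))
        = PowerSeries.C (R := ℝ) ((Nat.factorial (k+1) : ℝ) * Sf lam m k * x^(k+1)) *
            ((Gser lam x)^(k+2) * degExpP lam (((k:ℝ)+1) - ((m:ℝ)+1)*lam))
          + PowerSeries.C (R := ℝ) ((Nat.factorial k : ℝ) * ((k:ℝ) - m*lam) * Sf lam m k * x^k) *
            ((Gser lam x)^(k+1) * degExpP lam ((k:ℝ) - ((m:ℝ)+1)*lam)) := by
      intro k _
      rw [Derivation.leibniz, PowerSeries.derivative_C, smul_zero, add_zero]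
      rw [Derivation.leibniz, Derivation.leibniz_pow, derivative_Gser, derivative_degExpP]
      rw [show ((k:ℝ) - m*lam) - lam = (k:ℝ) - ((m:ℝ)+1)*lam by ring]
      rw [show k + 1 - 1 = k from rfl]
      have hE : degExpP lam (1-lam) * degExpP lam ((k:ℝ) - m*lam)
          = degExpP lam (((k:ℝ)+1) - ((m:ℝ)+1)*lam) := by
        rw [degExpP_mul, show (1-lam) + ((k:ℝ)-m*lam) = ((k:ℝ)+1)-((m:ℝ)+1)*lam by ring]
      have hC1 : PowerSeries.C (R := ℝ) ((Nat.factorial (k+1) : ℝ) * Sf lam m k * x^(k+1))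
          = ((k+1 : ℕ) : PowerSeries ℝ) *
            PowerSeries.C (R := ℝ) ((Nat.factorial k : ℝ) * Sf lam m k * x^k) * PowerSeries.C (R := ℝ) x := by
        rw [← map_natCast (PowerSeries.C (R := ℝ)) (k+1), ← map_mul, ← map_mul]
        congr 1
        rw [Nat.factorial_succ]
        push_cast
        ring
      have hC2 : PowerSeries.C (R := ℝ) ((Nat.factorial k : ℝ) * ((k:ℝ) - m*lam) * Sf lam m k * x^k)
          = PowerSeries.C (R := ℝ) ((Nat.factorial k : ℝ) * Sf lam m k * x^k) *
            PowerSeries.C (R := ℝ) ((k:ℝ) - m*lam) := by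
        rw [← map_mul]
        congr 1
        ring
      rw [hC1, hC2]
      simp only [smul_eq_mul, nsmul_eq_mul]
      linear_combination (PowerSeries.C (R := ℝ) ((Nat.factorial k : ℝ) * Sf lam m k * x^k) *
        PowerSeries.C (R := ℝ) x * (Gser lam x)^(k+2) * ((k+1 : ℕ) : PowerSeries ℝ)) * hE
    rw [Finset.sum_congr rfl step]
    have h0p : (fun (k : ℕ) => PowerSeries.C (R := ℝ) ((Nat.factorial k : ℝ) * Sf lam (m+1) k * x^k)) 0
        = (fun (k : ℕ) => PowerSeries.C (R := ℝ) ((Nat.factorial k : ℝ) * ((k:ℝ) - m*lam) * Sf lam m k * x^k)) 0 := by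
      simp only [Nat.cast_zero]
      rw [Sf_zero_succ]
      ring_nf
    have hsuccp : ∀ k : ℕ,
        (fun (k : ℕ) => PowerSeries.C (R := ℝ) ((Nat.factorial k : ℝ) * Sf lam (m+1) k * x^k)) (k+1)
        = (fun (k : ℕ) => PowerSeries.C (R := ℝ) ((Nat.factorial (k+1) : ℝ) * Sf lam m k * x^(k+1))) k
          + (fun (k : ℕ) => PowerSeries.C (R := ℝ) ((Nat.factorial k : ℝ) * ((k:ℝ) - m*lam) * Sf lam m k * x^k)) (k+1) := by
      intro k
      simp only
      rw [← map_add]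
      congr 1
      rw [Sf_succ_succ]
      push_cast [Nat.factorial_succ]
      ring
    have htopp : (fun (k : ℕ) => PowerSeries.C (R := ℝ) ((Nat.factorial k : ℝ) * ((k:ℝ) - m*lam) * Sf lam m k * x^k)) (m+1)
        = 0 := by
      simp only [hvan, mul_zero, zero_mul, map_zero]
    have hre := regroup
      (fun (k : ℕ) => PowerSeries.C (R := ℝ) ((Nat.factorial (k+1) : ℝ) * Sf lam m k * x^(k+1)))
      (fun (k : ℕ) => PowerSeries.C (R := ℝ) ((Nat.factorial k : ℝ) * ((k:ℝ) - m*lam) * Sf lam m k * x^k))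
      (fun (k : ℕ) => PowerSeries.C (R := ℝ) ((Nat.factorial k : ℝ) * Sf lam (m+1) k * x^k))
      (fun (k : ℕ) => (Gser lam x)^(k+1) * degExpP lam ((k:ℝ) - ((m:ℝ)+1)*lam))
      m h0p hsuccp htopp
    refine Eq.trans ?_ (Eq.trans hre ?_)
    · apply Finset.sum_congr rfl
      intro k _
      push_cast
      ring_nf
    · apply Finset.sum_congr rfl
      intro k _
      push_cast
      ring_nf

theorem coeff_iterate_deriv (m : ℕ) : ∀ (f : PowerSeries ℝ) (n : ℕ),
    (Nat.factorial n : ℝ) * PowerSeries.coeff (R := ℝ) n ((d⁄dX ℝ)^[m] f)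
      = (Nat.factorial (n+m) : ℝ) * PowerSeries.coeff (R := ℝ) (n+m) f := by
  induction m with
  | zero => intro f n; simp
  | succ m IH =>
    intro f n
    rw [Function.iterate_succ_apply]
    rw [IH (d⁄dX ℝ f) n, PowerSeries.coeff_derivative]
    rw [show n + (m+1) = (n+m)+1 from rfl, Nat.factorial_succ]
    push_cast
    ring

theorem sumF_eq_coeff (lam x : ℝ) (N : ℕ) :
    ∑ j ∈ Finset.range (N+1), (Nat.factorial j : ℝ) * Sf lam N j * x^j
      = (Nat.factorial N : ℝ) * PowerSeries.coeff (R := ℝ) N (Gser lam x) := by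
  rw [coeff_Gser, Finset.mul_sum]
  apply Finset.sum_congr rfl
  intro j _
  rw [coeff_sub_one_pow]
  have hN : (Nat.factorial N : ℝ) ≠ 0 := Nat.cast_ne_zero.2 (Nat.factorial_ne_zero N)
  field_simp

theorem coeff_mul_binom (A B : PowerSeries ℝ) (n : ℕ) :
    (Nat.factorial n : ℝ) * PowerSeries.coeff (R := ℝ) n (A * B)
      = ∑ l ∈ Finset.range (n+1), (n.choose l : ℝ) *
          ((Nat.factorial (n-l) : ℝ) * PowerSeries.coeff (R := ℝ) (n-l) A) *
          ((Nat.factorial l : ℝ) * PowerSeries.coeff (R := ℝ) l B) := by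
  rw [PowerSeries.coeff_mul, Finset.Nat.sum_antidiagonal_eq_sum_range_succ_mk]
  have hrefl : ∑ i ∈ Finset.range (n+1),
      PowerSeries.coeff (R := ℝ) i A * PowerSeries.coeff (R := ℝ) (n-i) B
      = ∑ l ∈ Finset.range (n+1),
      PowerSeries.coeff (R := ℝ) (n-l) A * PowerSeries.coeff (R := ℝ) (n-(n-l)) B := by
    rw [← Finset.sum_range_reflect (fun i => PowerSeries.coeff (R := ℝ) i A * PowerSeries.coeff (R := ℝ) (n-i) B) (n+1)]
    apply Finset.sum_congr rfl
    intro l hl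
    rw [Finset.mem_range] at hl
    rw [show n+1-1-l = n-l by omega]
  rw [hrefl, Finset.mul_sum]
  apply Finset.sum_congr rfl
  intro l hl
  rw [Finset.mem_range] at hl
  rw [show n-(n-l) = l by omega]
  have hfac : ((n.choose l : ℕ) * (Nat.factorial l) * (Nat.factorial (n-l)) : ℕ) = Nat.factorial n :=
    Nat.choose_mul_factorial_mul_factorial (by omega)
  have : ((n.choose l : ℝ)) * (Nat.factorial l : ℝ) * (Nat.factorial (n-l) : ℝ) = (Nat.factorial n : ℝ) := by
    exact_mod_cast congrArg (Nat.cast : ℕ → ℝ) hfac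
  linear_combination (-(PowerSeries.coeff (R := ℝ) (n-l) A * PowerSeries.coeff (R := ℝ) l B)) * this

/-- Spivey-type recurrence for the degenerate Fubini polynomials
`F_{n,λ}(x) = Σ_{k=0}^n k! {n brace k}_λ x^k`:
`F_{n+m,λ}(x) = Σ_{k=0}^m Σ_{l=0}^n k! {m brace k}_λ C(n,l) x^k
F_{n−l,λ}^{(k)}(x, k−mλ) F_{l,λ}(x)`, where `S n k = {n brace k}_λ` is defined
by `(x)_{n,λ} = Σ_k S n k (x)_k`. -/
theorem stmt11 (lam x : ℝ) (S : ℕ → ℕ → ℝ)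
    (hS : ∀ (n : ℕ) (z : ℝ),
      degFall lam z n = ∑ k ∈ Finset.range (n + 1), S n k * fallF z k)
    (n m : ℕ) :
    (∑ j ∈ Finset.range (n + m + 1), (Nat.factorial j : ℝ) * S (n + m) j * x ^ j) =
      ∑ k ∈ Finset.range (m + 1), ∑ l ∈ Finset.range (n + 1),
        (Nat.factorial k : ℝ) * S m k * (n.choose l : ℝ) * x ^ k *
          degFubiniOrd lam k x ((k : ℝ) - m * lam) (n - l) *
          (∑ j ∈ Finset.range (l + 1), (Nat.factorial j : ℝ) * S l j * x ^ j) := by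
  have hSf : ∀ m' k', k' ≤ m' → Sf lam m' k' = S m' k' := by
    intro m' k' h
    rw [Sf_eq_S lam S hS, if_pos h]
  have hvan : ∀ m' : ℕ, Sf lam m' (m'+1) = 0 := by
    intro m'
    rw [Sf_eq_S lam S hS, if_neg (by omega)]
  -- replace S by Sf everywhere
  have hrepl : ∀ N : ℕ, ∑ j ∈ Finset.range (N+1), (Nat.factorial j : ℝ) * S N j * x^j
      = ∑ j ∈ Finset.range (N+1), (Nat.factorial j : ℝ) * Sf lam N j * x^j := by
    intro N
    apply Finset.sum_congr rfl
    intro j hj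
    rw [Finset.mem_range] at hj
    rw [hSf N j (by omega)]
  rw [hrepl (n+m), sumF_eq_coeff]
  have hiter := coeff_iterate_deriv m (Gser lam x) n
  rw [← hiter, main_ind lam x hvan m, map_sum, Finset.mul_sum]
  apply Finset.sum_congr rfl
  intro k hk
  rw [Finset.mem_range] at hk
  rw [show (Gser lam x)^(k+1) * degExpP lam ((k:ℝ) - m*lam)
      = ((Gser lam x)^k * degExpP lam ((k:ℝ) - m*lam)) * Gser lam x by ring]
  rw [PowerSeries.coeff_C_mul]
  rw [show (Nat.factorial n : ℝ) * ((Nat.factorial k : ℝ) * Sf lam m k * x^k *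
        PowerSeries.coeff (R := ℝ) n (((Gser lam x)^k * degExpP lam ((k:ℝ) - m*lam)) * Gser lam x))
      = ((Nat.factorial k : ℝ) * Sf lam m k * x^k) *
        ((Nat.factorial n : ℝ) * PowerSeries.coeff (R := ℝ) n
          (((Gser lam x)^k * degExpP lam ((k:ℝ) - m*lam)) * Gser lam x)) by ring]
  rw [coeff_mul_binom, Finset.mul_sum]
  apply Finset.sum_congr rfl
  intro l hl
  rw [Finset.mem_range] at hl
  rw [hrepl l, sumF_eq_coeff]
  rw [hSf m k (by omega)]
  have hfub : degFubiniOrd lam k x ((k:ℝ) - m*lam) (n-l)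
      = (Nat.factorial (n-l) : ℝ) *
        PowerSeries.coeff (R := ℝ) (n-l) ((Gser lam x)^k * degExpP lam ((k:ℝ) - m*lam)) := rfl
  rw [hfub]
  ring
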